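/- Let Σ₁, Σ₂ ⊆ Σ be sub-σ-algebras. Then the von Neumann algebra generated by {M_g : g bounded Σ₁-measurable} ∪ {M_g : g bounded Σ₂-measurable} is equal to the von Neumann algebra generated by {M_g : g bounded (Σ₁ ⊔ Σ₂)-measurable}, where Σ₁ ⊔ Σ₂ is the σ-algebra generated by Σ₁ ∪ Σ₂. -/

import Mathlib

open MeasureTheory

/-- The von Neumann algebra generated by a set of bounded operators: the double commutant
of the star-subalgebra it generates. -/
noncomputable def vnGen {H : Type*} [NormedAddCommGroup H] [InnerProductSpace ℂ H]
    [CompleteSpace H] (s : Set (H →L[ℂ] H)) : Set (H →L[ℂ] H) :=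
  Set.centralizer (Set.centralizer
    ((StarAlgebra.adjoin ℂ s : StarSubalgebra ℂ (H →L[ℂ] H)) : Set (H →L[ℂ] H)))

/-- The set of multiplication operators on `L²(μ; ℂ)` by bounded `m`-measurable functions. -/
def mulOps {S : Type*} {_mS : MeasurableSpace S} (μ : Measure S) (m : MeasurableSpace S) :
    Set (Lp ℂ 2 μ →L[ℂ] Lp ℂ 2 μ) :=
  {T | ∃ g : S → ℂ, Measurable[m] g ∧ (∃ C : ℝ, ∀ s, ‖g s‖ ≤ C) ∧
    ∀ f : Lp ℂ 2 μ, (T f : S → ℂ) =ᵐ[μ] fun s => g s * f s}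

open MeasureTheory Set Filter Topology ComplexConjugate
open scoped NNReal ENNReal

section Aux

variable {S : Type*} [mS : MeasurableSpace S] {μ : Measure S}

variable {S : Type*} [mS : MeasurableSpace S] {μ : Measure S}

lemma memLp_mulfun {g : S → ℂ} (hg : Measurable g) {C : ℝ} (hC : ∀ s, ‖g s‖ ≤ C)
    (f : Lp ℂ 2 μ) : MemLp (fun s => g s * (f : S → ℂ) s) 2 μ := by
  refine MemLp.of_le_mul (c := C) (Lp.memLp f) (hg.aestronglyMeasurable.mul (Lp.aestronglyMeasurable f)) ?_
  filter_upwards with s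
  rw [norm_mul]
  exact mul_le_mul_of_nonneg_right (hC s) (norm_nonneg _)

lemma eLpNorm_mulfun_le {g : S → ℂ} {C : ℝ≥0} (hC : ∀ s, ‖g s‖ ≤ C) (f : Lp ℂ 2 μ) :
    eLpNorm (fun s => g s * (f : S → ℂ) s) 2 μ ≤ C * eLpNorm (f : S → ℂ) 2 μ := by
  have h := eLpNorm_le_nnreal_smul_eLpNorm_of_ae_le_mul (μ := μ) (c := C)
    (f := fun s => g s * (f : S → ℂ) s) (g := (f : S → ℂ)) ?_ 2
  · simpa [ENNReal.smul_def] using h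
  · filter_upwards with s
    have : ‖g s * (f : S → ℂ) s‖₊ = ‖g s‖₊ * ‖(f : S → ℂ) s‖₊ := nnnorm_mul _ _
    rw [this]
    exact mul_le_mul_of_nonneg_right (by exact_mod_cast hC s) (zero_le)

/-- Multiplication operator by a bounded measurable function. -/
noncomputable def mulL (g : S → ℂ) (hg : Measurable g) (C : ℝ≥0) (hC : ∀ s, ‖g s‖ ≤ C) :
    Lp ℂ 2 μ →L[ℂ] Lp ℂ 2 μ :=
  LinearMap.mkContinuous
    { toFun := fun f => (memLp_mulfun hg hC f).toLp _
      map_add' := fun f f' => by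
        apply Lp.ext
        filter_upwards [MemLp.coeFn_toLp (memLp_mulfun hg hC (f + f')),
          MemLp.coeFn_toLp (memLp_mulfun hg hC f), MemLp.coeFn_toLp (memLp_mulfun hg hC f'),
          Lp.coeFn_add f f',
          Lp.coeFn_add ((memLp_mulfun hg hC f).toLp _) ((memLp_mulfun hg hC f').toLp _)]
          with s h1 h2 h3 h4 h5
        simp only [h1, h5, Pi.add_apply, h2, h3, h4, mul_add]
      map_smul' := fun c f => by
        apply Lp.ext
        filter_upwards [MemLp.coeFn_toLp (memLp_mulfun hg hC (c • f)),
          MemLp.coeFn_toLp (memLp_mulfun hg hC f), Lp.coeFn_smul c f,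
          Lp.coeFn_smul c ((memLp_mulfun hg hC f).toLp _)] with s h1 h2 h3 h4
        simp only [h1, h4, Pi.smul_apply, h2, h3, smul_eq_mul, RingHom.id_apply]
        ring }
    C
    (by
      intro f
      simp only [LinearMap.coe_mk, AddHom.coe_mk]
      rw [Lp.norm_toLp]
      have h := eLpNorm_mulfun_le hC f
      have : ((C : ℝ≥0∞) * eLpNorm (f : S → ℂ) 2 μ).toReal = C * ‖f‖ := by
        rw [ENNReal.toReal_mul, Lp.norm_def, ENNReal.coe_toReal]
      rw [← this]
      exact ENNReal.toReal_mono (ENNReal.mul_ne_top ENNReal.coe_ne_top (Lp.eLpNorm_ne_top f)) h)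

lemma mulL_apply (g : S → ℂ) (hg : Measurable g) (C : ℝ≥0) (hC : ∀ s, ‖g s‖ ≤ C)
    (f : Lp ℂ 2 μ) : (mulL g hg C hC f : S → ℂ) =ᵐ[μ] fun s => g s * f s :=
  MemLp.coeFn_toLp (memLp_mulfun hg hC f)

lemma Measurable.of_le {m : MeasurableSpace S} (hm : m ≤ mS) {g : S → ℂ}
    (hg : Measurable[m] g) : Measurable[mS] g := fun _t ht => hm _ (hg ht)

lemma mulL_congr {g g' : S → ℂ} (h : ∀ s, g s = g' s) (hg : Measurable g) (C : ℝ≥0)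
    (hC : ∀ s, ‖g s‖ ≤ C) (hg' : Measurable g') (C' : ℝ≥0) (hC' : ∀ s, ‖g' s‖ ≤ C') :
    (mulL g hg C hC : Lp ℂ 2 μ →L[ℂ] Lp ℂ 2 μ) = mulL g' hg' C' hC' := by
  refine ContinuousLinearMap.ext fun f => Lp.ext ?_
  filter_upwards [mulL_apply g hg C hC f, mulL_apply g' hg' C' hC' f] with s h1 h2
  rw [h1, h2, h s]

lemma mulL_mem_mulOps {m : MeasurableSpace S} (hm : m ≤ mS) {g : S → ℂ}
    (hg : Measurable[m] g) (C : ℝ≥0) (hC : ∀ s, ‖g s‖ ≤ C) :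
    (mulL (mS := mS) g (Measurable.of_le (mS := mS) hm hg) C hC) ∈ mulOps μ m :=
  ⟨g, hg, ⟨C, hC⟩, fun f => mulL_apply (mS := mS) g (Measurable.of_le (mS := mS) hm hg) C hC f⟩

lemma mem_mulOps_iff {m : MeasurableSpace S} (hm : m ≤ mS) {T : Lp ℂ 2 μ →L[ℂ] Lp ℂ 2 μ} :
    T ∈ mulOps μ m ↔ ∃ (g : S → ℂ) (hg : Measurable[m] g) (C : ℝ≥0) (hC : ∀ s, ‖g s‖ ≤ C),
      T = mulL (mS := mS) g (Measurable.of_le (mS := mS) hm hg) C hC := by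
  constructor
  · rintro ⟨g, hg, ⟨C₀, hC₀⟩, hae⟩
    refine ⟨g, hg, ⟨max C₀ 0, le_max_right _ _⟩, fun s => (hC₀ s).trans (le_max_left _ _), ?_⟩
    refine ContinuousLinearMap.ext fun f => Lp.ext ?_
    exact (hae f).trans (mulL_apply (mS := mS) g _ _ _ f).symm
  · rintro ⟨g, hg, C, hC, rfl⟩
    exact mulL_mem_mulOps (mS := mS) hm hg C hC

lemma star_mulL (g : S → ℂ) (hg : Measurable g) (C : ℝ≥0) (hC : ∀ s, ‖g s‖ ≤ C) :
    star (mulL g hg C hC : Lp ℂ 2 μ →L[ℂ] Lp ℂ 2 μ) =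
      mulL (fun s => conj (g s)) (Complex.continuous_conj.measurable.comp hg) C
        (fun s => by simpa using hC s) := by
  rw [ContinuousLinearMap.star_eq_adjoint]
  symm
  rw [ContinuousLinearMap.eq_adjoint_iff]
  intro x y
  rw [L2.inner_def, L2.inner_def]
  apply integral_congr_ae
  filter_upwards [mulL_apply (fun s => conj (g s)) (Complex.continuous_conj.measurable.comp hg) C
    (fun s => by simpa using hC s) x, mulL_apply g hg C hC y] with s h1 h2
  rw [h1, h2]
  simp only [RCLike.inner_apply, map_mul, Complex.conj_conj]
  ring

lemma mulOps_star_closed {m : MeasurableSpace S} (hm : m ≤ mS) {T : Lp ℂ 2 μ →L[ℂ] Lp ℂ 2 μ}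
    (hT : T ∈ mulOps μ m) : star T ∈ mulOps μ m := by
  rw [mem_mulOps_iff (mS := mS) hm] at hT ⊢
  obtain ⟨g, hg, C, hC, rfl⟩ := hT
  have hg' : Measurable[m] fun s => conj (g s) := Complex.continuous_conj.measurable.comp hg
  have hC' : ∀ s, ‖conj (g s)‖ ≤ (C:ℝ) := fun s => by simpa using hC s
  refine ⟨fun s => conj (g s), hg', C, hC', ?_⟩
  rw [star_mulL (mS := mS)]

lemma centralizer_adjoin_eq {A : Type*} [Ring A] [StarRing A] [Algebra ℂ A] [StarModule ℂ A]
    (s : Set A) (hs : ∀ a ∈ s, star a ∈ s) :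
    Set.centralizer ((StarAlgebra.adjoin ℂ s : StarSubalgebra ℂ A) : Set A) =
      Set.centralizer s := by
  apply subset_antisymm
  · exact Set.centralizer_subset (StarAlgebra.subset_adjoin ℂ s)
  · intro T hT a ha
    have key : a * T = T * a ∧ star a * T = T * star a := by
      induction ha using StarAlgebra.adjoin_induction with
      | mem x hx => exact ⟨hT x hx, hT _ (hs x hx)⟩
      | algebraMap r =>
        refine ⟨(Algebra.commutes r T), ?_⟩
        rw [← algebraMap_star_comm]
        exact Algebra.commutes _ T
      | add x y hx hy ihx ihy =>
        refine ⟨by rw [add_mul, mul_add, ihx.1, ihy.1], ?_⟩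
        rw [star_add, add_mul, mul_add, ihx.2, ihy.2]
      | mul x y hx hy ihx ihy =>
        refine ⟨by rw [mul_assoc, ihy.1, ← mul_assoc, ihx.1, mul_assoc], ?_⟩
        rw [star_mul, mul_assoc, ihx.2, ← mul_assoc, ihy.2, mul_assoc]
      | star x hx ihx => exact ⟨ihx.2, by rw [star_star]; exact ihx.1⟩
    exact key.1

/-- `g` is a bounded measurable function whose multiplication operator commutes with `T`. -/
def goodFun (μ : Measure S) (T : Lp ℂ 2 μ →L[ℂ] Lp ℂ 2 μ) (g : S → ℂ) : Prop :=
  ∃ (hg : Measurable[mS] g) (C : ℝ≥0) (hC : ∀ s, ‖g s‖ ≤ C),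
    mulL g hg C hC * T = T * mulL g hg C hC

variable {T : Lp ℂ 2 μ →L[ℂ] Lp ℂ 2 μ}

lemma goodFun_comm (h : goodFun μ T g) (hg : Measurable[mS] g) (C : ℝ≥0)
    (hC : ∀ s, ‖g s‖ ≤ C) : mulL g hg C hC * T = T * mulL g hg C hC := by
  obtain ⟨hg₀, C₀, hC₀, hcom⟩ := h
  rw [mulL_congr (fun _ => rfl) hg C hC hg₀ C₀ hC₀]
  exact hcom

lemma goodFun_congr {g g' : S → ℂ} (h : ∀ s, g s = g' s) (hgood : goodFun μ T g) :
    goodFun μ T g' := by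
  obtain ⟨hg, C, hC, hcom⟩ := hgood
  have hg' : Measurable[mS] g' := by rw [show g' = g from funext fun s => (h s).symm]; exact hg
  have hC' : ∀ s, ‖g' s‖ ≤ (C:ℝ) := fun s => (h s) ▸ hC s
  exact ⟨hg', C, hC', by
    rw [mulL_congr (fun s => (h s).symm) hg' C hC' hg C hC]; exact hcom⟩

lemma goodFun_const (c : ℂ) : goodFun μ T (fun _ => c) := by
  have hg : Measurable[mS] (fun _ : S => c) := measurable_const
  have hC : ∀ s : S, ‖c‖ ≤ ((‖c‖₊ : ℝ≥0) : ℝ) := fun _ => le_rfl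
  refine ⟨hg, ‖c‖₊, hC, ?_⟩
  have : mulL (fun _ => c) hg ‖c‖₊ hC = c • (1 : Lp ℂ 2 μ →L[ℂ] Lp ℂ 2 μ) := by
    refine ContinuousLinearMap.ext fun f => Lp.ext ?_
    simp only [ContinuousLinearMap.smul_apply, ContinuousLinearMap.one_apply]
    filter_upwards [mulL_apply (fun _ => c) hg ‖c‖₊ hC f, Lp.coeFn_smul c f] with s e1 e2
    rw [e1, e2, Pi.smul_apply, smul_eq_mul]
  rw [this, smul_mul_assoc, one_mul, mul_smul_comm, mul_one]

lemma goodFun_add {g₁ g₂ : S → ℂ} (h1 : goodFun μ T g₁) (h2 : goodFun μ T g₂) :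
    goodFun μ T (fun s => g₁ s + g₂ s) := by
  obtain ⟨hg1, C1, hC1, hcom1⟩ := h1
  obtain ⟨hg2, C2, hC2, hcom2⟩ := h2
  have hg : Measurable[mS] fun s => g₁ s + g₂ s := hg1.add hg2
  have hC : ∀ s, ‖g₁ s + g₂ s‖ ≤ ((C1 + C2 : ℝ≥0) : ℝ) := fun s => by
    push_cast
    exact (norm_add_le _ _).trans (add_le_add (hC1 s) (hC2 s))
  have heq : mulL (μ := μ) (fun s => g₁ s + g₂ s) hg (C1 + C2) hC
      = mulL g₁ hg1 C1 hC1 + mulL g₂ hg2 C2 hC2 := by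
    refine ContinuousLinearMap.ext fun f => Lp.ext ?_
    simp only [ContinuousLinearMap.add_apply]
    filter_upwards [mulL_apply _ hg _ hC f, mulL_apply g₁ hg1 C1 hC1 f,
      mulL_apply g₂ hg2 C2 hC2 f,
      Lp.coeFn_add (mulL g₁ hg1 C1 hC1 f) (mulL g₂ hg2 C2 hC2 f)] with s e1 e2 e3 e4
    rw [e1, e4, Pi.add_apply, e2, e3, add_mul]
  exact ⟨hg, C1 + C2, hC, by rw [heq, add_mul, mul_add, hcom1, hcom2]⟩

lemma goodFun_smul (c : ℂ) {g : S → ℂ} (h : goodFun μ T g) :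
    goodFun μ T (fun s => c * g s) := by
  obtain ⟨hg, C, hC, hcom⟩ := h
  have hg' : Measurable[mS] fun s => c * g s := (measurable_const (a := c)).mul hg
  have hC' : ∀ s, ‖c * g s‖ ≤ ((‖c‖₊ * C : ℝ≥0) : ℝ) := fun s => by
    push_cast
    rw [norm_mul]
    exact mul_le_mul_of_nonneg_left (hC s) (norm_nonneg c)
  have heq : mulL (μ := μ) (fun s => c * g s) hg' (‖c‖₊ * C) hC' = c • mulL g hg C hC := by
    refine ContinuousLinearMap.ext fun f => Lp.ext ?_
    simp only [ContinuousLinearMap.coe_smul', Pi.smul_apply]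
    filter_upwards [mulL_apply _ hg' _ hC' f, mulL_apply g hg C hC f,
      Lp.coeFn_smul c (mulL g hg C hC f)] with s e1 e2 e3
    rw [e1, e3, Pi.smul_apply, e2, smul_eq_mul, mul_assoc]
  exact ⟨hg', ‖c‖₊ * C, hC', by
    rw [heq, smul_mul_assoc, mul_smul_comm, hcom]⟩

lemma goodFun_mul {g₁ g₂ : S → ℂ} (h1 : goodFun μ T g₁) (h2 : goodFun μ T g₂) :
    goodFun μ T (fun s => g₁ s * g₂ s) := by
  obtain ⟨hg1, C1, hC1, hcom1⟩ := h1
  obtain ⟨hg2, C2, hC2, hcom2⟩ := h2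
  have hg : Measurable[mS] fun s => g₁ s * g₂ s := hg1.mul hg2
  have hC : ∀ s, ‖g₁ s * g₂ s‖ ≤ ((C1 * C2 : ℝ≥0) : ℝ) := fun s => by
    push_cast
    rw [norm_mul]
    exact mul_le_mul (hC1 s) (hC2 s) (norm_nonneg _) (NNReal.coe_nonneg C1)
  have heq : mulL (μ := μ) (fun s => g₁ s * g₂ s) hg (C1 * C2) hC
      = mulL g₁ hg1 C1 hC1 * mulL g₂ hg2 C2 hC2 := by
    refine ContinuousLinearMap.ext fun f => Lp.ext ?_
    simp only [ContinuousLinearMap.mul_apply]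
    filter_upwards [mulL_apply _ hg _ hC f, mulL_apply g₂ hg2 C2 hC2 f,
      mulL_apply g₁ hg1 C1 hC1 (mulL g₂ hg2 C2 hC2 f),
      (mulL_apply g₂ hg2 C2 hC2 f).mono fun s e => congrArg (fun z => g₁ s * z) e] with s e1 e2 e3 e4
    rw [e1, e3, e4, mul_assoc]
  exact ⟨hg, C1 * C2, hC, by
    rw [heq, mul_assoc, hcom2, ← mul_assoc, hcom1, mul_assoc]⟩

lemma goodFun_sub {g₁ g₂ : S → ℂ} (h1 : goodFun μ T g₁) (h2 : goodFun μ T g₂) :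
    goodFun μ T (fun s => g₁ s - g₂ s) := by
  have := goodFun_add h1 (goodFun_smul (-1) h2)
  exact goodFun_congr (fun s => by ring) this

lemma goodFun_limit {g : ℕ → S → ℂ} {G : S → ℂ}
    (hG : Measurable[mS] G) {C : ℝ≥0} (hb : ∀ n s, ‖g n s‖ ≤ C)
    (hgood : ∀ n, goodFun μ T (g n))
    (hconv : ∀ s, Tendsto (fun n => g n s) atTop (𝓝 (G s))) : goodFun μ T G := by
  have hGC : ∀ s, ‖G s‖ ≤ (C : ℝ) := fun s =>
    le_of_tendsto ((continuous_norm.tendsto _).comp (hconv s))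
      (Eventually.of_forall fun n => hb n s)
  have hgm : ∀ n, Measurable[mS] (g n) := fun n => (hgood n).choose
  set M : ℕ → (Lp ℂ 2 μ →L[ℂ] Lp ℂ 2 μ) := fun n => mulL (g n) (hgm n) C (hb n) with hM
  have hMcomm : ∀ n, M n * T = T * M n := fun n => goodFun_comm (hgood n) _ _ _
  set MG : Lp ℂ 2 μ →L[ℂ] Lp ℂ 2 μ := mulL G hG C hGC with hMG
  have key : ∀ f : Lp ℂ 2 μ, Tendsto (fun n => M n f) atTop (𝓝 (MG f)) := by
    intro f
    rw [Lp.tendsto_Lp_iff_tendsto_eLpNorm']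
    have hcong : ∀ n, eLpNorm ((M n f : S → ℂ) - (MG f : S → ℂ)) 2 μ
        = eLpNorm (fun s => (g n s - G s) * (f : S → ℂ) s) 2 μ := by
      intro n
      apply eLpNorm_congr_ae
      filter_upwards [mulL_apply (g n) (hgm n) C (hb n) f, mulL_apply G hG C hGC f] with s e1 e2
      simp only [hM, hMG, Pi.sub_apply, e1, e2]
      ring
    simp only [hcong]
    have h2 : ∀ (h : S → ℂ), eLpNorm h 2 μ
        = (∫⁻ s, (‖h s‖₊ : ℝ≥0∞) ^ (2:ℕ) ∂μ) ^ (1/(2:ℝ)) := by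
      intro h
      rw [eLpNorm_eq_lintegral_rpow_enorm_toReal (by norm_num) (by norm_num)]
      simp only [enorm_eq_nnnorm]
      have : ∀ s, ((‖h s‖₊ : ℝ≥0∞)) ^ ((2:ℝ≥0∞).toReal) = (‖h s‖₊ : ℝ≥0∞) ^ (2:ℕ) := by
        intro s
        rw [show (2:ℝ≥0∞).toReal = ((2:ℕ):ℝ) by norm_num, ENNReal.rpow_natCast]
      rw [lintegral_congr fun s => this s]
      norm_num
    simp only [h2]
    have hlim : Tendsto
        (fun n => ∫⁻ s, (‖(g n s - G s) * (f : S → ℂ) s‖₊ : ℝ≥0∞) ^ (2:ℕ) ∂μ)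
        atTop (𝓝 0) := by
      have h0 : (0:ℝ≥0∞) = ∫⁻ _s, (0:ℝ≥0∞) ∂μ := by simp
      rw [h0]
      refine tendsto_lintegral_of_dominated_convergence'
        (fun s => (((2:ℝ≥0) * C : ℝ≥0) : ℝ≥0∞) ^ (2:ℕ) * (‖(f : S → ℂ) s‖₊ : ℝ≥0∞) ^ (2:ℕ))
        (fun n => ?_) (fun n => ?_) ?_ ?_
      · exact ((((hgm n).sub hG).aemeasurable.mul
          (Lp.aestronglyMeasurable f).aemeasurable).enorm).pow_const _
      · filter_upwards with s
        rw [← mul_pow]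
        gcongr
        have hr : ‖(g n s - G s) * (f : S → ℂ) s‖₊ ≤ ((2:ℝ≥0) * C) * ‖(f : S → ℂ) s‖₊ := by
          rw [← NNReal.coe_le_coe]
          push_cast
          rw [norm_mul]
          refine mul_le_mul_of_nonneg_right ?_ (norm_nonneg _)
          calc ‖g n s - G s‖ ≤ ‖g n s‖ + ‖G s‖ := norm_sub_le _ _
            _ ≤ C + C := add_le_add (hb n s) (hGC s)
            _ = 2 * C := by ring
        exact_mod_cast hr
      · have hfin : ∫⁻ s, (‖(f : S → ℂ) s‖₊ : ℝ≥0∞) ^ (2:ℕ) ∂μ < ⊤ := by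
          have hlt := Lp.eLpNorm_lt_top f
          rw [h2] at hlt
          exact (ENNReal.rpow_lt_top_iff_of_pos (by norm_num : (0:ℝ) < 1/2)).1 hlt
        rw [lintegral_const_mul' _ _ (ENNReal.pow_ne_top ENNReal.coe_ne_top)]
        exact (ENNReal.mul_lt_top (ENNReal.pow_lt_top ENNReal.coe_lt_top) hfin).ne
      · filter_upwards with s
        have ht : Tendsto (fun n => (g n s - G s) * (f : S → ℂ) s) atTop (𝓝 0) := by
          have h2' := ((hconv s).sub_const (G s)).mul_const ((f : S → ℂ) s)
          simpa using h2'
        have : Tendsto (fun n => (‖(g n s - G s) * (f : S → ℂ) s‖₊ : ℝ≥0∞) ^ (2:ℕ))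
            atTop (𝓝 (((‖(0:ℂ)‖₊ : ℝ≥0∞)) ^ (2:ℕ))) := by
          refine (ENNReal.Tendsto.pow ?_)
          rw [ENNReal.tendsto_coe]
          exact ht.nnnorm
        simpa using this
    have hcont : Tendsto (fun x : ℝ≥0∞ => x ^ (1/(2:ℝ))) (𝓝 0) (𝓝 0) := by
      have h := (ENNReal.continuous_rpow_const (y := 1/(2:ℝ))).tendsto 0
      simpa [ENNReal.zero_rpow_of_pos] using h
    exact hcont.comp hlim
  refine ⟨hG, C, hGC, ?_⟩
  refine ContinuousLinearMap.ext fun f => ?_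
  have t1 : Tendsto (fun n => M n (T f)) atTop (𝓝 (MG (T f))) := key (T f)
  have t2 : Tendsto (fun n => T (M n f)) atTop (𝓝 (T (MG f))) :=
    (T.continuous.tendsto _).comp (key f)
  have he : (fun n => M n (T f)) = fun n => T (M n f) := funext fun n => by
    have h := hMcomm n
    calc M n (T f) = (M n * T) f := rfl
      _ = (T * M n) f := by rw [h]
      _ = T (M n f) := rfl
  rw [he] at t1
  exact tendsto_nhds_unique t1 t2

lemma measurable_indicator_one {A : Set S} (hA : MeasurableSet[mS] A) :
    Measurable[mS] (A.indicator (1 : S → ℂ)) := measurable_one.indicator hA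

lemma goodFun_indicator_sup {m₁ m₂ : MeasurableSpace S} (h₁ : m₁ ≤ mS) (h₂ : m₂ ≤ mS)
    (hA1 : ∀ A : Set S, MeasurableSet[m₁] A → goodFun (mS := mS) μ T (A.indicator 1))
    (hA2 : ∀ A : Set S, MeasurableSet[m₂] A → goodFun (mS := mS) μ T (A.indicator 1)) :
    ∀ A : Set S, MeasurableSet[m₁ ⊔ m₂] A → goodFun (mS := mS) μ T (A.indicator 1) := by
  intro A hA
  let d : MeasurableSpace S :=
    { MeasurableSet' := fun B => MeasurableSet[mS] B ∧ goodFun (mS := mS) μ T (B.indicator 1)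
      measurableSet_empty := ⟨@MeasurableSet.empty S mS, by
        refine goodFun_congr (mS := mS) (g := fun _ => (0:ℂ)) (fun s => ?_)
          (goodFun_const (mS := mS) 0)
        simp⟩
      measurableSet_compl := by
        rintro B ⟨hB, hBg⟩
        refine ⟨hB.compl, ?_⟩
        refine goodFun_congr (mS := mS) (fun s => ?_)
          (goodFun_sub (mS := mS) (goodFun_const (mS := mS) 1) hBg)
        by_cases hs : s ∈ B <;> simp [Set.indicator_apply, hs]
      measurableSet_iUnion := by
        rintro F hF
        have hFm : ∀ i, MeasurableSet[mS] (F i) := fun i => (hF i).1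
        refine ⟨MeasurableSet.iUnion hFm, ?_⟩
        have hacc : ∀ n, goodFun (mS := mS) μ T ((Set.accumulate F n).indicator 1) := by
          intro n
          induction n with
          | zero =>
            refine goodFun_congr (mS := mS) (fun s => ?_) (hF 0).2
            have h0 : Set.accumulate F 0 = F 0 := by
              ext x; simp [Set.mem_accumulate, Nat.le_zero]
            rw [h0]
          | succ n ih =>
            refine goodFun_congr (mS := mS) (fun s => ?_)
              (goodFun_sub (mS := mS) (goodFun_add (mS := mS) ih (hF (n+1)).2)
                (goodFun_mul (mS := mS) ih (hF (n+1)).2))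
            have hsucc : Set.accumulate F (n+1) = Set.accumulate F n ∪ F (n+1) := by
              ext x
              simp only [Set.mem_accumulate, Set.mem_union]
              constructor
              · rintro ⟨y, hy, hx⟩
                by_cases h : y ≤ n
                · exact Or.inl ⟨y, h, hx⟩
                · have heq : y = n + 1 := by omega
                  exact Or.inr (heq ▸ hx)
              · rintro (⟨y, hy, hx⟩ | hx)
                · exact ⟨y, by omega, hx⟩
                · exact ⟨n + 1, le_rfl, hx⟩
            rw [hsucc]
            by_cases h1 : s ∈ Set.accumulate F n <;> by_cases h2 : s ∈ F (n+1) <;>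
              simp [Set.indicator_apply, h1, h2]
        refine goodFun_limit (mS := mS)
          (measurable_indicator_one (mS := mS) (MeasurableSet.iUnion hFm)) (C := 1)
          (fun n s => ?_) hacc (fun s => ?_)
        · by_cases h : s ∈ Set.accumulate F n <;> simp [Set.indicator_apply, h]
        · by_cases h : s ∈ ⋃ i, F i
          · obtain ⟨i, hi⟩ := Set.mem_iUnion.1 h
            have hev : ∀ᶠ n in atTop, (Set.accumulate F n).indicator (1 : S → ℂ) s = 1 := by
              filter_upwards [eventually_ge_atTop i] with n hn
              have hmem : s ∈ Set.accumulate F n :=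
                Set.monotone_accumulate hn (Set.subset_accumulate hi)
              simp [Set.indicator_apply, hmem]
            rw [show (⋃ i, F i).indicator (1 : S → ℂ) s = 1 by simp [Set.indicator_apply, h]]
            exact Tendsto.congr' (hev.mono fun n hn => hn.symm) tendsto_const_nhds
          · have hnot : ∀ n, s ∉ Set.accumulate F n := fun n hn =>
              h (by rw [← Set.iUnion_accumulate]; exact Set.mem_iUnion.2 ⟨n, hn⟩)
            rw [show (⋃ i, F i).indicator (1 : S → ℂ) s = 0 by simp [Set.indicator_apply, h]]
            refine tendsto_const_nhds.congr fun n => ?_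
            simp [Set.indicator_apply, hnot n] }
  have hle : m₁ ⊔ m₂ ≤ d :=
    sup_le (fun B hB => ⟨h₁ _ hB, hA1 B hB⟩) (fun B hB => ⟨h₂ _ hB, hA2 B hB⟩)
  exact (hle A hA).2

lemma goodFun_of_measurable {m : MeasurableSpace S} (hm : m ≤ mS)
    (hind : ∀ A : Set S, MeasurableSet[m] A → goodFun (mS := mS) μ T (A.indicator 1))
    {g : S → ℂ} (hg : Measurable[m] g) {C : ℝ≥0} (hC : ∀ s, ‖g s‖ ≤ C) :
    goodFun (mS := mS) μ T g := by
  have hsimple : ∀ φ : @SimpleFunc S m ℂ, goodFun (mS := mS) μ T φ := by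
    intro φ
    refine @SimpleFunc.induction S ℂ m _ (fun ψ => goodFun (mS := mS) μ T ψ) ?_ ?_ φ
    · intro c s hs
      refine goodFun_congr (mS := mS) (fun x => ?_) (goodFun_smul (mS := mS) c (hind s hs))
      by_cases hx : x ∈ s <;>
        simp [SimpleFunc.coe_piecewise, SimpleFunc.coe_const, Set.piecewise,
          Set.indicator_apply, hx, Function.const]
    · intro f₁ f₂ _hdisj hf1 hf2
      refine goodFun_congr (mS := mS) (fun x => ?_) (goodFun_add (mS := mS) hf1 hf2)
      simp [SimpleFunc.coe_add]
  haveI : TopologicalSpace.SeparableSpace (Set.univ : Set ℂ) :=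
    inferInstance
  let φ : ℕ → @SimpleFunc S m ℂ := fun n =>
    @SimpleFunc.approxOn ℂ S _ _ _ m g hg Set.univ 0 (Set.mem_univ 0) _ n
  have hb : ∀ n x, ‖φ n x‖ ≤ ((2 * C : ℝ≥0) : ℝ) := by
    intro n x
    have h1 : dist (φ n x) (g x) ≤ dist (0:ℂ) (g x) := by
      have he := @SimpleFunc.edist_approxOn_le ℂ S _ _ _ m g hg Set.univ 0 (Set.mem_univ 0) _ x n
      rw [edist_dist, edist_dist] at he
      exact (ENNReal.ofReal_le_ofReal_iff dist_nonneg).1 he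
    have : ‖φ n x‖ ≤ ‖g x‖ + ‖g x‖ := by
      calc ‖φ n x‖ = dist (φ n x) 0 := (dist_zero_right _).symm
        _ ≤ dist (φ n x) (g x) + dist (g x) 0 := dist_triangle _ _ _
        _ ≤ dist (0:ℂ) (g x) + dist (g x) 0 := add_le_add_left h1 _
        _ = ‖g x‖ + ‖g x‖ := by simp [dist_comm, dist_zero_right]
    refine this.trans ?_
    push_cast
    calc ‖g x‖ + ‖g x‖ ≤ (C:ℝ) + (C:ℝ) := add_le_add (hC x) (hC x)
      _ = 2 * C := by ring
  have hconv : ∀ x, Tendsto (fun n => φ n x) atTop (𝓝 (g x)) := by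
    intro x
    exact @SimpleFunc.tendsto_approxOn ℂ S _ _ _ m g hg Set.univ 0 (Set.mem_univ 0) _ x
      (by rw [closure_univ]; exact Set.mem_univ _)
  exact goodFun_limit (mS := mS) (Measurable.of_le (mS := mS) hm hg) hb
    (fun n => hsimple (φ n)) hconv

lemma mulOps_mono {m m' : MeasurableSpace S} (h : m ≤ m') :
    mulOps μ m ⊆ mulOps μ m' := by
  rintro M ⟨g, hg, hb, hae⟩
  exact ⟨g, fun t ht => h _ (hg ht), hb, hae⟩

end Aux

/-- **Lemma 2a13.** `L_∞(Σ₁) ∨ L_∞(Σ₂) = L_∞(Σ₁ ⊔ Σ₂)`: the von Neumann algebra generated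
by the multiplication operators by bounded `Σ₁`-measurable and bounded `Σ₂`-measurable
functions equals the von Neumann algebra generated by the multiplication operators by
bounded `(Σ₁ ⊔ Σ₂)`-measurable functions. -/
theorem stmt_8
    {S : Type*} [mS : MeasurableSpace S] (μ : Measure S) [IsFiniteMeasure μ]
    [TopologicalSpace.SeparableSpace (Lp ℂ 2 μ)]
    (m₁ m₂ : MeasurableSpace S) (h₁ : m₁ ≤ mS) (h₂ : m₂ ≤ mS) :
    vnGen (mulOps μ m₁ ∪ mulOps μ m₂) = vnGen (mulOps μ (m₁ ⊔ m₂)) := by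
  unfold vnGen
  have hsup : m₁ ⊔ m₂ ≤ mS := sup_le h₁ h₂
  have hsub : mulOps μ m₁ ∪ mulOps μ m₂ ⊆ mulOps μ (m₁ ⊔ m₂) :=
    Set.union_subset (mulOps_mono (mS := mS) le_sup_left)
      (mulOps_mono (mS := mS) le_sup_right)
  have hstarU : ∀ A ∈ mulOps μ m₁ ∪ mulOps μ m₂,
      star A ∈ mulOps μ m₁ ∪ mulOps μ m₂ := by
    rintro A (hA | hA)
    · exact Or.inl (mulOps_star_closed (mS := mS) h₁ hA)
    · exact Or.inr (mulOps_star_closed (mS := mS) h₂ hA)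
  have hstarS : ∀ A ∈ mulOps μ (m₁ ⊔ m₂), star A ∈ mulOps μ (m₁ ⊔ m₂) :=
    fun A hA => mulOps_star_closed (mS := mS) hsup hA
  have hkey : Set.centralizer (mulOps μ m₁ ∪ mulOps μ m₂)
      = Set.centralizer (mulOps μ (m₁ ⊔ m₂)) := by
    apply Set.Subset.antisymm
    · intro T hT
      intro M hM
      rw [mem_mulOps_iff (mS := mS) hsup] at hM
      obtain ⟨g, hg, C, hC, rfl⟩ := hM
      have hind : ∀ (mi : MeasurableSpace S) (hmi : mi ≤ mS),
          mulOps μ mi ⊆ mulOps μ m₁ ∪ mulOps μ m₂ →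
          ∀ A : Set S, MeasurableSet[mi] A → goodFun (mS := mS) μ T (A.indicator 1) := by
        intro mi hmi hsub' A hA
        have hgm : Measurable[mi] (A.indicator (1 : S → ℂ)) := measurable_one.indicator hA
        have hb1 : ∀ s, ‖A.indicator (1 : S → ℂ) s‖ ≤ ((1:ℝ≥0):ℝ) := fun s => by
          by_cases h : s ∈ A <;> simp [Set.indicator_apply, h]
        exact ⟨Measurable.of_le (mS := mS) hmi hgm, 1, hb1,
          hT _ (hsub' (mulL_mem_mulOps (mS := mS) hmi hgm 1 hb1))⟩
      have hA1 : ∀ A : Set S, MeasurableSet[m₁] A → goodFun (mS := mS) μ T (A.indicator 1) :=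
        hind m₁ h₁ (Set.subset_union_left)
      have hA2 : ∀ A : Set S, MeasurableSet[m₂] A → goodFun (mS := mS) μ T (A.indicator 1) :=
        hind m₂ h₂ (Set.subset_union_right)
      have hgood : goodFun (mS := mS) μ T g :=
        goodFun_of_measurable (mS := mS) hsup
          (goodFun_indicator_sup (mS := mS) h₁ h₂ hA1 hA2) hg hC
      exact goodFun_comm (mS := mS) hgood _ _ _
    · exact Set.centralizer_subset hsub
  rw [centralizer_adjoin_eq _ hstarU, centralizer_adjoin_eq _ hstarS, hkey]
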